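/- If R is the direct product of finite rings R₁, …, Rₙ with unity, then the distant graph G(R,Δ) is isomorphic to the tensor product of the distant graphs G(R₁,Δ₁) × ⋯ × G(Rₙ,Δₙ): points of P(R) correspond to n-tuples of points, and two tuples are distant iff they are distant in every coordinate. -/

import Mathlib

open Matrix

/-- The cyclic left submodule `R(a,b)` of `R²`. -/
def ptSub (R : Type*) [Ring R] (a b : R) : Submodule R (Fin 2 → R) :=
  Submodule.span R {![a, b]}

/-- The right action of an invertible matrix `g` on submodules of `R²`, via `v ↦ v ᵥ* g`. -/
def mulGL (R : Type*) [Ring R] (g : (Matrix (Fin 2) (Fin 2) R)ˣ)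
    (p : Submodule R (Fin 2 → R)) : Submodule R (Fin 2 → R) :=
  p.map (Matrix.vecMulLinear g.val)

/-- The projective line over `R`: the orbit of `R(1,0)` under `GL₂(R)`. -/
def projLine (R : Type*) [Ring R] : Set (Submodule R (Fin 2 → R)) :=
  {p | ∃ g, mulGL R g (ptSub R 1 0) = p}

/-- The distant relation: the orbit of the pair `(R(1,0), R(0,1))` under `GL₂(R)`. -/
def IsDistant (R : Type*) [Ring R] (p q : Submodule R (Fin 2 → R)) : Prop :=
  ∃ g, mulGL R g (ptSub R 1 0) = p ∧ mulGL R g (ptSub R 0 1) = q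


open Matrix Submodule

section Aux
variable {ι : Type*} (R : ι → Type*) [∀ i, Ring (R i)]

/-- Evaluation at coordinate `i`, as a semilinear map. -/
def evalSL (i : ι) : (Fin 2 → ∀ i, R i) →ₛₗ[Pi.evalRingHom R i] (Fin 2 → R i) where
  toFun v := fun j => v j i
  map_add' _ _ := rfl
  map_smul' _ _ := rfl

@[simp] lemma evalSL_apply (i : ι) (v : Fin 2 → ∀ i, R i) (j : Fin 2) :
    evalSL R i v j = v j i := rfl

lemma map_evalSL_span (i : ι) (v : Fin 2 → ∀ i, R i) :
    (Submodule.span (∀ i, R i) {v}).map (evalSL R i) =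
      Submodule.span (R i) {fun j => v j i} := by
  rw [Submodule.map_span, Set.image_singleton]
  rfl

lemma span_eq_of_eval (v w : Fin 2 → ∀ i, R i)
    (h : ∀ i, (Submodule.span (∀ i, R i) {v}).map (evalSL R i) =
      (Submodule.span (∀ i, R i) {w}).map (evalSL R i)) :
    Submodule.span (∀ i, R i) {v} = Submodule.span (∀ i, R i) {w} := by
  have key : ∀ (v w : Fin 2 → ∀ i, R i),
      (∀ i, (fun j => v j i) ∈ Submodule.span (R i) {fun j => w j i}) →
      v ∈ Submodule.span (∀ i, R i) {w} := by
    intro v w hv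
    choose c hc using fun i => (Submodule.mem_span_singleton).1 (hv i)
    refine (Submodule.mem_span_singleton).2 ⟨c, ?_⟩
    funext j; funext i
    exact congrFun (hc i) j
  apply le_antisymm <;>
    refine (Submodule.span_singleton_le_iff_mem _ _).2 (key _ _ fun i => ?_)
  · have := (h i).le
    rw [map_evalSL_span, map_evalSL_span] at this
    exact this (Submodule.mem_span_singleton_self _)
  · have := (h i).ge
    rw [map_evalSL_span, map_evalSL_span] at this
    exact this (Submodule.mem_span_singleton_self _)

lemma mulGL_eq_span {S : Type*} [Ring S] (g : (Matrix (Fin 2) (Fin 2) S)ˣ) (a b : S) :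
    mulGL S g (ptSub S a b) = Submodule.span S {![a, b] ᵥ* g.val} := by
  rw [mulGL, ptSub, Submodule.map_span, Set.image_singleton, Matrix.vecMulLinear_apply]

/-- componentwise matrix unit -/
def prodUnit (g : ∀ i, (Matrix (Fin 2) (Fin 2) (R i))ˣ) : (Matrix (Fin 2) (Fin 2) (∀ i, R i))ˣ where
  val := fun k l i => (g i).val k l
  inv := fun k l i => (g i).inv k l
  val_inv := by
    ext k l i
    have h : (g i).val k 0 * (g i).inv 0 l + (g i).val k 1 * (g i).inv 1 l
        = (1 : Matrix (Fin 2) (Fin 2) (R i)) k l := by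
      rw [← Fin.sum_univ_two (f := fun j => (g i).val k j * (g i).inv j l), ← Matrix.mul_apply,
        (g i).val_inv]
    erw [Matrix.mul_apply, Fin.sum_univ_two]
    show (g i).val k 0 * (g i).inv 0 l + (g i).val k 1 * (g i).inv 1 l
        = (1 : Matrix (Fin 2) (Fin 2) (∀ i, R i)) k l i
    rw [h, Matrix.one_apply, Matrix.one_apply, apply_ite (fun f : ∀ i, R i => f i)]
    rfl
  inv_val := by
    ext k l i
    have h : (g i).inv k 0 * (g i).val 0 l + (g i).inv k 1 * (g i).val 1 l
        = (1 : Matrix (Fin 2) (Fin 2) (R i)) k l := by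
      rw [← Fin.sum_univ_two (f := fun j => (g i).inv k j * (g i).val j l), ← Matrix.mul_apply,
        (g i).inv_val]
    erw [Matrix.mul_apply, Fin.sum_univ_two]
    show (g i).inv k 0 * (g i).val 0 l + (g i).inv k 1 * (g i).val 1 l
        = (1 : Matrix (Fin 2) (Fin 2) (∀ i, R i)) k l i
    rw [h, Matrix.one_apply, Matrix.one_apply, apply_ite (fun f : ∀ i, R i => f i)]
    rfl

lemma eval_vecMul (i : ι) (v : Fin 2 → ∀ i, R i) (M : Matrix (Fin 2) (Fin 2) (∀ i, R i)) :
    (fun k => (v ᵥ* M) k i) = (fun j => v j i) ᵥ* ((Pi.evalRingHom R i).mapMatrix M) := by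
  funext k
  simp [Matrix.vecMul, dotProduct, Fin.sum_univ_two]

lemma map_evalSL_mulGL (i : ι) (g : (Matrix (Fin 2) (Fin 2) (∀ i, R i))ˣ) (a b : ∀ i, R i) :
    (mulGL (∀ i, R i) g (ptSub (∀ i, R i) a b)).map (evalSL R i) =
      mulGL (R i) (Units.map (Pi.evalRingHom R i).mapMatrix.toMonoidHom g)
        (ptSub (R i) (a i) (b i)) := by
  rw [mulGL_eq_span, mulGL_eq_span, map_evalSL_span]
  have h : (fun j => (![a, b] ᵥ* g.val) j i) =
      ![a i, b i] ᵥ* (Units.map (Pi.evalRingHom R i).mapMatrix.toMonoidHom g).val := by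
    have hc : (Units.map (Pi.evalRingHom R i).mapMatrix.toMonoidHom g).val
        = (Pi.evalRingHom R i).mapMatrix g.val := rfl
    rw [hc, eval_vecMul]
    congr 1
    funext j; fin_cases j <;> rfl
  rw [h]

end Aux

section Aux2
variable {ι : Type*} (R : ι → Type*) [∀ i, Ring (R i)]

lemma Ug_prodUnit (i : ι) (g : ∀ i, (Matrix (Fin 2) (Fin 2) (R i))ˣ) :
    Units.map (Pi.evalRingHom R i).mapMatrix.toMonoidHom (prodUnit R g) = g i :=
  Units.ext rfl

lemma mem_line_span {S : Type*} [Ring S] {p : Submodule S (Fin 2 → S)}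
    (hp : p ∈ projLine S) : ∃ v, p = Submodule.span S {v} := by
  obtain ⟨g, hg⟩ := hp
  exact ⟨_, by rw [← hg, mulGL_eq_span]⟩

lemma span_pt_eq_of_eval (p q : Submodule (∀ i, R i) (Fin 2 → ∀ i, R i))
    (hp : ∃ v, p = Submodule.span (∀ i, R i) {v}) (hq : ∃ w, q = Submodule.span (∀ i, R i) {w})
    (h : ∀ i, p.map (evalSL R i) = q.map (evalSL R i)) : p = q := by
  obtain ⟨v, rfl⟩ := hp
  obtain ⟨w, rfl⟩ := hq
  exact span_eq_of_eval R v w h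

end Aux2

/-- For a direct product `R = R₁ × ⋯ × Rₙ` of finite rings, the distant graph
`G(R,Δ)` is isomorphic to the tensor product of the graphs `G(Rᵢ,Δᵢ)`: points of `P(R)`
correspond to tuples of points, and two tuples are distant iff they are distant in every
coordinate. -/
theorem distant_graph_of_prod {n : ℕ} (R : Fin n → Type*) [∀ i, Ring (R i)]
    [∀ i, Fintype (R i)] :
    ∃ e : {p : Submodule (∀ i, R i) (Fin 2 → ∀ i, R i) // p ∈ projLine (∀ i, R i)} ≃
        (∀ i, {p : Submodule (R i) (Fin 2 → R i) // p ∈ projLine (R i)}),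
      ∀ p q, IsDistant (∀ i, R i) p.1 q.1 ↔ ∀ i, IsDistant (R i) (e p i).1 (e q i).1 := by
  classical
  have memline : ∀ (p : {p // p ∈ projLine (∀ i, R i)}) (i : Fin n),
      p.1.map (evalSL R i) ∈ projLine (R i) := by
    intro p i
    obtain ⟨g, hg⟩ := p.2
    exact ⟨Units.map (Pi.evalRingHom R i).mapMatrix.toMonoidHom g,
      by rw [← hg]; exact (map_evalSL_mulGL R i g 1 0).symm⟩
  let f : {p // p ∈ projLine (∀ i, R i)} → ∀ i, {p // p ∈ projLine (R i)} :=
    fun p i => ⟨p.1.map (evalSL R i), memline p i⟩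
  have hinj : Function.Injective f := by
    intro p q h
    apply Subtype.ext
    exact span_pt_eq_of_eval R p.1 q.1 (mem_line_span p.2) (mem_line_span q.2)
      (fun i => congrArg Subtype.val (congrFun h i))
  have hsurj : Function.Surjective f := by
    intro P
    choose g hg using fun i => (P i).2
    refine ⟨⟨mulGL _ (prodUnit R g) (ptSub _ 1 0), ⟨prodUnit R g, rfl⟩⟩, ?_⟩
    funext i
    apply Subtype.ext
    show (mulGL _ (prodUnit R g) (ptSub _ 1 0)).map (evalSL R i) = (P i).1
    rw [map_evalSL_mulGL, Ug_prodUnit]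
    exact hg i
  refine ⟨Equiv.ofBijective f ⟨hinj, hsurj⟩, fun p q => ?_⟩
  constructor
  · rintro ⟨g, hg1, hg2⟩ i
    refine ⟨Units.map (Pi.evalRingHom R i).mapMatrix.toMonoidHom g, ?_, ?_⟩
    · show _ = p.1.map (evalSL R i)
      rw [← hg1]
      exact (map_evalSL_mulGL R i g 1 0).symm
    · show _ = q.1.map (evalSL R i)
      rw [← hg2]
      exact (map_evalSL_mulGL R i g 0 1).symm
  · intro hd
    choose g hg1 hg2 using hd
    refine ⟨prodUnit R g, ?_, ?_⟩
    · refine span_pt_eq_of_eval R _ _ ⟨_, mulGL_eq_span _ 1 0⟩ (mem_line_span p.2) fun i => ?_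
      rw [map_evalSL_mulGL, Ug_prodUnit]
      exact hg1 i
    · refine span_pt_eq_of_eval R _ _ ⟨_, mulGL_eq_span _ 0 1⟩ (mem_line_span q.2) fun i => ?_
      rw [map_evalSL_mulGL, Ug_prodUnit]
      exact hg2 i
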